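/- Let A be an abelian group, P a commutative monoid (written additively), f : A × A → P a commutative 2-cocycle, and Q = P ×_f A the twisted product, with γ : P → Q, p ↦ (p, 0), the canonical inclusion. Regard the monoid algebra ℤ[Q] as a module over the monoid algebra ℤ[P] via the ring homomorphism ℤ[P] → ℤ[Q] induced by γ. Then ℤ[Q] is a free ℤ[P]-module with basis the monomials { X^{(0,λ)} : λ ∈ A }; consequently ℤ[Q] ≅ ⊕_{λ ∈ A} ℤ[P] as a ℤ[P]-module, with the summand indexed by λ spanned by X^{(0,λ)}. -/

import Mathlib

/-- A type synonym for the underlying set of the twisted product `Q = P ×_f A`. -/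
structure TwistedProd (P A : Type*) where
  fst : P
  snd : A

/-- The ring map `ℤ[P] → ℤ[Q]` induced by the canonical inclusion `γ : p ↦ (p, 0)`,
as a map of underlying sets. -/
noncomputable def gammaStar (P A : Type*) [AddCommMonoid P] [AddCommGroup A]
    [AddCommMonoid (TwistedProd P A)] (cl : AddMonoidAlgebra ℤ P) :
    AddMonoidAlgebra ℤ (TwistedProd P A) :=
  AddMonoidAlgebra.ofCoeff
    (Finsupp.mapDomain (fun p : P => (⟨p, 0⟩ : TwistedProd P A)) cl.coeff)

/-- Let `f : A × A → P` be a commutative 2-cocycle and `Q = P ×_f A` the twisted product,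
with canonical inclusion `γ : p ↦ (p, 0)`.  Regarding `ℤ[Q]` as a `ℤ[P]`-module via the
ring homomorphism induced by `γ`, `ℤ[Q]` is a free `ℤ[P]`-module with basis the monomials
`X^{(0,λ)}` for `λ ∈ A`:  the map `⊕_{λ ∈ A} ℤ[P] → ℤ[Q]` sending a finitely supported
family `(c_λ)` to `Σ_λ γ_*(c_λ) · X^{(0,λ)}` is a bijection. -/
theorem stacky_covers_monoid_algebra_free (P A : Type*) [AddCommMonoid P] [AddCommGroup A]
    (f : A × A → P)
    (hf0 : ∀ lam : A, f (0, lam) = 0)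
    (hfc : ∀ lam lam' : A, f (lam, lam') = f (lam', lam))
    (hfa : ∀ lam lam' lam'' : A,
      f (lam, lam') + f (lam + lam', lam'') = f (lam', lam'') + f (lam' + lam'', lam))
    [AddCommMonoid (TwistedProd P A)]
    (hadd : ∀ x y : TwistedProd P A,
      x + y = ⟨x.fst + y.fst + f (x.snd, y.snd), x.snd + y.snd⟩)
    (hzero : (0 : TwistedProd P A) = ⟨0, 0⟩) :
    Function.Bijective (fun c : A →₀ AddMonoidAlgebra ℤ P =>
      c.sum fun lam cl =>
        gammaStar P A cl *
          AddMonoidAlgebra.single (⟨0, lam⟩ : TwistedProd P A) (1 : ℤ)) := by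
  -- The map equals `equivMapDomain e ∘ uncurry` for the evident equivalence `A × P ≃ Q`.
  let e : (A × P) ≃ TwistedProd P A :=
    { toFun := fun x => ⟨x.2, x.1⟩
      invFun := fun x => (x.snd, x.fst)
      left_inv := fun x => rfl
      right_inv := fun x => rfl }
  have key : ∀ (lam : A) (cl : AddMonoidAlgebra ℤ P),
      gammaStar P A cl * AddMonoidAlgebra.single (⟨0, lam⟩ : TwistedProd P A) (1 : ℤ)
        = cl.coeff.sum fun p m =>
            AddMonoidAlgebra.single (⟨p, lam⟩ : TwistedProd P A) m := by
    intro lam cl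
    rw [gammaStar, Finsupp.mapDomain, AddMonoidAlgebra.ofCoeff_finsuppSum, Finsupp.sum_mul]
    apply Finsupp.sum_congr
    intro p _
    show AddMonoidAlgebra.single (⟨p, 0⟩ : TwistedProd P A) (cl.coeff p) *
        AddMonoidAlgebra.single (⟨0, lam⟩ : TwistedProd P A) (1 : ℤ)
      = AddMonoidAlgebra.single (⟨p, lam⟩ : TwistedProd P A) (cl.coeff p)
    rw [AddMonoidAlgebra.single_mul_single, hadd, mul_one]
    simp [hf0]
  have heq : (fun c : A →₀ AddMonoidAlgebra ℤ P =>
      c.sum fun lam cl =>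
        gammaStar P A cl *
          AddMonoidAlgebra.single (⟨0, lam⟩ : TwistedProd P A) (1 : ℤ))
      = AddMonoidAlgebra.ofCoeff ∘ (Finsupp.equivCongrLeft e) ∘ (Finsupp.finsuppProdEquiv
          (α := A) (β := P) (M := ℤ)).symm
          ∘ (Finsupp.mapRange.addEquiv AddMonoidAlgebra.coeffAddEquiv) := by
    funext c
    simp only [Function.comp_apply, Finsupp.finsuppProdEquiv,
      Equiv.coe_fn_symm_mk, Finsupp.equivCongrLeft_apply,
      Finsupp.equivMapDomain_eq_mapDomain, Finsupp.curryEquiv_symm_apply]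
    rw [← Finsupp.sum_single (Finsupp.uncurry _), Finsupp.sum_uncurry_index]
    rw [show Finsupp.mapDomain (M := ℤ) (⇑e)
        = ⇑(Finsupp.mapDomain.addMonoidHom (M := ℤ) (⇑e)) from rfl,
      map_finsuppSum, AddMonoidAlgebra.ofCoeff_finsuppSum, Finsupp.mapRange.addEquiv_apply,
      Finsupp.sum_mapRange_index (fun _ => by simp)]
    apply Finsupp.sum_congr
    intro lam _
    rw [key, map_finsuppSum, AddMonoidAlgebra.ofCoeff_finsuppSum]
    apply Finsupp.sum_congr
    intro p _
    show _ = AddMonoidAlgebra.ofCoeff (Finsupp.mapDomain (M := ℤ) (⇑e) _)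
    rw [Finsupp.mapDomain_single]
    rfl
  rw [heq]
  exact AddMonoidAlgebra.coeffEquiv.symm.bijective.comp
    ((Finsupp.equivCongrLeft e).bijective.comp
    ((Finsupp.finsuppProdEquiv.symm.bijective).comp
    (Finsupp.mapRange.addEquiv AddMonoidAlgebra.coeffAddEquiv).bijective))
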